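/- Let φ: X → ℝ satisfy [φ]_{k+1} < ∞ (weak Lipschitz up to level k+1), and let c ≥ θ[φ]_{k+1}/(1-θ). If f ∈ Λ^k_c and the transfer operator image L_M f is continuous, then L_M f ∈ Λ^k_c. -/

import Mathlib

open Filter MeasureTheory Topology
open scoped ENNReal NNReal BigOperators

namespace TMS

variable {S : Type*}

/-- prepend a symbol to a one-sided sequence -/
def cons (a : S) (ω : ℕ → S) : ℕ → S
  | 0 => a
  | n + 1 => ω n

/-- the shift transformation -/
def shift (ω : ℕ → S) : ℕ → S := fun n => ω (n + 1)

/-- the (one-sided) topological Markov shift with transition matrix `A` -/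
def markovShift (A : S → S → Prop) : Set (ℕ → S) := {ω | ∀ n, A (ω n) (ω (n + 1))}

/-- the cylinder set of a word of length `n`, inside `X` -/
def cylW (X : Set (ℕ → S)) (n : ℕ) (w : Fin n → S) : Set (ℕ → S) :=
  {ω | ω ∈ X ∧ ∀ i : Fin n, ω i = w i}

/-- the cylinder set of a single symbol, inside `X` -/
def cyl1 (X : Set (ℕ → S)) (s : S) : Set (ℕ → S) := {ω | ω ∈ X ∧ ω 0 = s}

/-- Birkhoff sum `S_n φ` -/
noncomputable def birkhoff (φ : (ℕ → S) → ℝ) (n : ℕ) (ω : ℕ → S) : ℝ :=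
  ∑ i ∈ Finset.range n, φ (shift^[i] ω)

open Classical in
/-- the metric `d_θ` -/
noncomputable def dtheta (θ : ℝ) (ω υ : ℕ → S) : ℝ :=
  if ω = υ then 0 else θ ^ sInf {n | ω n ≠ υ n}

/-- supremum norm over `X` -/
noncomputable def supNorm (X : Set (ℕ → S)) (f : (ℕ → S) → ℝ) : ℝ :=
  sSup ((fun ω => |f ω|) '' X)

/-- `C` is a bound witnessing `[f]_k ≤ C`, i.e. `var_n f ≤ C θ^n` for all `n ≥ k`. -/
def LipBound (X : Set (ℕ → S)) (θ : ℝ) (k : ℕ) (f : (ℕ → S) → ℝ) (C : ℝ) : Prop :=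
  ∀ n, k ≤ n → ∀ ω, ω ∈ X → ∀ υ, υ ∈ X → (∀ i, i < n → ω i = υ i) →
    |f ω - f υ| ≤ C * θ ^ n

/-- the seminorm `[f]_k` -/
noncomputable def lipSemi (X : Set (ℕ → S)) (θ : ℝ) (k : ℕ) (f : (ℕ → S) → ℝ) : ℝ :=
  sInf {C | 0 ≤ C ∧ LipBound X θ k f C}

/-- the norm `‖f‖_k = ‖f‖_∞ + [f]_k` -/
noncomputable def normK (X : Set (ℕ → S)) (θ : ℝ) (k : ℕ) (f : (ℕ → S) → ℝ) : ℝ :=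
  supNorm X f + lipSemi X θ k f

/-- `φ` is summable: `Σ_{s : [s] ≠ ∅} exp (sup_{[s]} φ) < ∞` -/
def SummableOn (X : Set (ℕ → S)) (φ : (ℕ → S) → ℝ) : Prop :=
  (∀ s : S, BddAbove (φ '' cyl1 X s)) ∧
    Summable (fun s : {s : S // (cyl1 X s).Nonempty} => Real.exp (sSup (φ '' cyl1 X s.1)))

/-- finite irreducibility of a transition matrix -/
def FinitelyIrreducible (A : S → S → Prop) : Prop :=
  ∃ F : Finset (List S), ∀ a b : S, ∃ w ∈ F, List.Chain' A (a :: (w ++ [b]))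

/-- `X` contains a periodic point of the shift -/
def HasPeriodicPoint (X : Set (ℕ → S)) : Prop :=
  ∃ ω, ω ∈ X ∧ ∃ m, 0 < m ∧ shift^[m] ω = ω

/-- the Ruelle transfer operator `L_M` associated to `M` and the potential `φ` -/
noncomputable def transfer (M : S → S → Prop) (φ : (ℕ → S) → ℝ)
    (f : (ℕ → S) → ℝ) : (ℕ → S) → ℝ :=
  fun ω => ∑' a : {a : S // M a (ω 0)}, Real.exp (φ (cons a ω)) * f (cons a ω)

section Top

variable [TopologicalSpace S]

/-- the cone `Λ^k_c` -/
def cone (X : Set (ℕ → S)) (θ : ℝ) (k : ℕ) (c : ℝ) : Set ((ℕ → S) → ℝ) :=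
  {f | ContinuousOn f X ∧ (∀ ω ∈ X, 0 ≤ f ω) ∧
    ∀ ω ∈ X, ∀ υ ∈ X, (∀ i, i < k → ω i = υ i) →
      f ω ≤ Real.exp (c * dtheta θ ω υ) * f υ}

/-- the space `C_b(X)` of bounded continuous functions -/
def Cb (X : Set (ℕ → S)) : Set ((ℕ → S) → ℝ) :=
  {f | ContinuousOn f X ∧ BddAbove ((fun ω => |f ω|) '' X)}

/-- the space `F^k_b(X)` of bounded weak-Lipschitz functions -/
def Fkb (X : Set (ℕ → S)) (θ : ℝ) (k : ℕ) : Set ((ℕ → S) → ℝ) :=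
  {f | f ∈ Cb X ∧ ∃ C, LipBound X θ k f C}

end Top

/-- operator norm of `L` on the space `F` with norm `N` -/
noncomputable def opNorm (N : ((ℕ → S) → ℝ) → ℝ) (F : Set ((ℕ → S) → ℝ))
    (L : ((ℕ → S) → ℝ) → (ℕ → S) → ℝ) : ℝ :=
  sSup {r | ∃ f ∈ F, N f ≤ 1 ∧ r = N (L f)}

/-- spectral radius of `L` on `(F, N)` via the Gelfand formula -/
noncomputable def specRad (N : ((ℕ → S) → ℝ) → ℝ) (F : Set ((ℕ → S) → ℝ))
    (L : ((ℕ → S) → ℝ) → (ℕ → S) → ℝ) : ℝ :=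
  Filter.limsup (fun n : ℕ => (opNorm N F (L^[n])) ^ ((1 : ℝ) / n)) Filter.atTop

/-- the `n`-th partition function `Σ_{w ∈ Sⁿ, [w] ≠ ∅} exp (sup_{[w]} S_n φ)` -/
noncomputable def partition (X : Set (ℕ → S)) (φ : (ℕ → S) → ℝ) (n : ℕ) : ℝ≥0∞ :=
  ∑' w : {w : Fin n → S // (cylW X n w).Nonempty},
    ENNReal.ofReal (Real.exp (sSup (birkhoff φ n '' cylW X n w.1)))

/-- `P` is the topological pressure of `φ` on `X` -/
def IsPressure (X : Set (ℕ → S)) (φ : (ℕ → S) → ℝ) (P : ℝ) : Prop :=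
  Filter.Tendsto (fun n : ℕ => Real.log (partition X φ n).toReal / (n : ℝ))
    Filter.atTop (nhds P)

/-- there is an `M`-path from `a` to `b` (of length at least one) -/
def reaches (M : S → S → Prop) (a b : S) : Prop :=
  ∃ l : List S, List.Chain M a (l ++ [b])

/-- communication relation `a ↔ b` -/
def comm (M : S → S → Prop) (a b : S) : Prop :=
  a = b ∨ (reaches M a b ∧ reaches M b a)

/-- the submatrix of `M` indexed by `T` -/
def restrictM (M : S → S → Prop) (T : Set S) : S → S → Prop :=
  fun a b => M a b ∧ a ∈ T ∧ b ∈ T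

/-- support of a Borel measure -/
def msupport [TopologicalSpace S] [MeasurableSpace S] (ν : Measure (ℕ → S)) :
    Set (ℕ → S) :=
  {ω | ∀ U : Set (ℕ → S), IsOpen U → ω ∈ U → 0 < ν U}

end TMS

/-- if `[φ]_{k+1} < ∞`, `c ≥ θ[φ]_{k+1}/(1-θ)`, `f ∈ Λ^k_c` and `L_M f`
is continuous, then `L_M f ∈ Λ^k_c`. -/

private lemma cons_mem' {S : Type*} (A : S → S → Prop) {ω : ℕ → S}
    (hω : ω ∈ TMS.markovShift A) {a : S} (ha : A a (ω 0)) :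
    TMS.cons a ω ∈ TMS.markovShift A := by
  intro n
  cases n with
  | zero => exact ha
  | succ n => exact hω n

private lemma lipSemi_isBound' {S : Type*} (X : Set (ℕ → S)) (θ : ℝ) (hθ0 : 0 < θ)
    (m : ℕ) (φ : (ℕ → S) → ℝ) (hφ : ∃ C, TMS.LipBound X θ m φ C) :
    TMS.LipBound X θ m φ (TMS.lipSemi X θ m φ) := by
  obtain ⟨C, hC⟩ := hφ
  have hmem : max C 0 ∈ {C | 0 ≤ C ∧ TMS.LipBound X θ m φ C} := by
    refine ⟨le_max_right _ _, fun n hn ω hω υ hυ h => ?_⟩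
    exact (hC n hn ω hω υ hυ h).trans
      (mul_le_mul_of_nonneg_right (le_max_left _ _) (pow_nonneg hθ0.le n))
  intro n hn ω hω υ hυ h
  rw [show TMS.lipSemi X θ m φ = sInf {C | 0 ≤ C ∧ TMS.LipBound X θ m φ C} from rfl,
    ← div_le_iff₀ (pow_pos hθ0 n)]
  refine le_csInf ⟨_, hmem⟩ fun B hB => ?_
  rw [div_le_iff₀ (pow_pos hθ0 n)]
  exact hB.2 n hn ω hω υ hυ h

private lemma term_bound' {S : Type*} (A : S → S → Prop)
    (θ : ℝ) (hθ0 : 0 < θ) (hθ1 : θ < 1) (k : ℕ)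
    (φ : (ℕ → S) → ℝ) (Cφ : ℝ)
    (hφ : TMS.LipBound (TMS.markovShift A) θ (k+1) φ Cφ)
    (c : ℝ) (hc0 : 0 ≤ c) (hkey : Cφ * θ + c * θ ≤ c)
    (f : (ℕ → S) → ℝ)
    (hfpos : ∀ ω ∈ TMS.markovShift A, 0 ≤ f ω)
    (hfc : ∀ ω ∈ TMS.markovShift A, ∀ υ ∈ TMS.markovShift A, (∀ i, i < k → ω i = υ i) →
      f ω ≤ Real.exp (c * TMS.dtheta θ ω υ) * f υ)
    {ω υ : ℕ → S} (hω : ω ∈ TMS.markovShift A) (hυ : υ ∈ TMS.markovShift A)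
    (N : ℕ) (hN : k ≤ N) (hag : ∀ i, i < N → ω i = υ i)
    {a : S} (haω : A a (ω 0)) (haυ : A a (υ 0)) :
    Real.exp (φ (TMS.cons a ω)) * f (TMS.cons a ω) ≤
      Real.exp (c * θ ^ N) * (Real.exp (φ (TMS.cons a υ)) * f (TMS.cons a υ)) := by
  have hω' := cons_mem' A hω haω
  have hυ' := cons_mem' A hυ haυ
  have hag' : ∀ i, i < N + 1 → TMS.cons a ω i = TMS.cons a υ i := by
    intro i hi
    cases i with
    | zero => rfl
    | succ i => exact hag i (by omega)
  -- bound on φ difference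
  have hφb : |φ (TMS.cons a ω) - φ (TMS.cons a υ)| ≤ Cφ * θ ^ (N + 1) :=
    hφ (N + 1) (by omega) _ hω' _ hυ' hag'
  have hφ' : φ (TMS.cons a ω) ≤ φ (TMS.cons a υ) + Cφ * θ ^ (N + 1) := by
    have := abs_le.mp hφb
    linarith [this.2]
  -- bound on dtheta
  have hd : TMS.dtheta θ (TMS.cons a ω) (TMS.cons a υ) ≤ θ ^ (N + 1) := by
    by_cases heq : TMS.cons a ω = TMS.cons a υ
    · simp [TMS.dtheta, heq]
      positivity
    · have hne : {n | TMS.cons a ω n ≠ TMS.cons a υ n}.Nonempty :=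
        Function.ne_iff.mp heq
      have hmem := Nat.sInf_mem hne
      have hge : N + 1 ≤ sInf {n | TMS.cons a ω n ≠ TMS.cons a υ n} := by
        by_contra h
        push_neg at h
        exact hmem (hag' _ h)
      simp only [TMS.dtheta, heq, if_false]
      exact pow_le_pow_of_le_one hθ0.le hθ1.le hge
  -- bound on f
  have hf1 : f (TMS.cons a ω) ≤ Real.exp (c * θ ^ (N + 1)) * f (TMS.cons a υ) := by
    refine (hfc _ hω' _ hυ' fun i hi => hag' i (by omega)).trans ?_
    exact mul_le_mul_of_nonneg_right
      (Real.exp_le_exp.2 (mul_le_mul_of_nonneg_left hd hc0)) (hfpos _ hυ')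
  have hsum : Cφ * θ ^ (N + 1) + c * θ ^ (N + 1) ≤ c * θ ^ N := by
    have hpow : (0:ℝ) ≤ θ ^ N := pow_nonneg hθ0.le N
    have : (Cφ * θ + c * θ) * θ ^ N ≤ c * θ ^ N :=
      mul_le_mul_of_nonneg_right hkey hpow
    calc Cφ * θ ^ (N + 1) + c * θ ^ (N + 1) = (Cφ * θ + c * θ) * θ ^ N := by ring
      _ ≤ c * θ ^ N := this
  calc Real.exp (φ (TMS.cons a ω)) * f (TMS.cons a ω)
      ≤ Real.exp (φ (TMS.cons a ω)) * (Real.exp (c * θ ^ (N + 1)) * f (TMS.cons a υ)) :=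
        mul_le_mul_of_nonneg_left hf1 (Real.exp_pos _).le
    _ ≤ Real.exp (φ (TMS.cons a υ) + Cφ * θ ^ (N + 1)) *
          (Real.exp (c * θ ^ (N + 1)) * f (TMS.cons a υ)) :=
        mul_le_mul_of_nonneg_right (Real.exp_le_exp.2 hφ')
          (mul_nonneg (Real.exp_pos _).le (hfpos _ hυ'))
    _ = Real.exp (Cφ * θ ^ (N + 1) + c * θ ^ (N + 1)) *
          (Real.exp (φ (TMS.cons a υ)) * f (TMS.cons a υ)) := by
        rw [Real.exp_add, Real.exp_add]
        ring
    _ ≤ Real.exp (c * θ ^ N) * (Real.exp (φ (TMS.cons a υ)) * f (TMS.cons a υ)) :=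
        mul_le_mul_of_nonneg_right (Real.exp_le_exp.2 hsum)
          (mul_nonneg (Real.exp_pos _).le (hfpos _ hυ'))

theorem stmt3 {S : Type*} [Countable S] [TopologicalSpace S] [DiscreteTopology S]
    (A M : S → S → Prop) (hMA : ∀ a b, M a b → A a b)
    (θ : ℝ) (hθ0 : 0 < θ) (hθ1 : θ < 1) (k : ℕ) (hk : 1 ≤ k)
    (φ : (ℕ → S) → ℝ)
    (hφlip : ∃ C, TMS.LipBound (TMS.markovShift A) θ (k + 1) φ C)
    (c : ℝ) (hc : θ * TMS.lipSemi (TMS.markovShift A) θ (k + 1) φ / (1 - θ) ≤ c)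
    (f : (ℕ → S) → ℝ) (hf : f ∈ TMS.cone (TMS.markovShift A) θ k c)
    (hcont : ContinuousOn (TMS.transfer M φ f) (TMS.markovShift A)) :
    TMS.transfer M φ f ∈ TMS.cone (TMS.markovShift A) θ k c := by
  obtain ⟨hfcont, hfpos, hfc⟩ := hf
  set X := TMS.markovShift A
  have hCφ : TMS.LipBound X θ (k + 1) φ (TMS.lipSemi X θ (k + 1) φ) :=
    lipSemi_isBound' X θ hθ0 (k + 1) φ hφlip
  set Cφ := TMS.lipSemi X θ (k + 1) φ with hCφdef
  have hCφ0 : 0 ≤ Cφ := by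
    apply Real.sInf_nonneg
    rintro x ⟨hx, -⟩
    exact hx
  have hc0 : 0 ≤ c := le_trans (div_nonneg (mul_nonneg hθ0.le hCφ0) (by linarith)) hc
  have hkey : Cφ * θ + c * θ ≤ c := by
    have h1θ : 0 < 1 - θ := by linarith
    rw [div_le_iff₀ h1θ] at hc
    nlinarith
  refine ⟨hcont, ?_, ?_⟩
  · intro ω hω
    apply tsum_nonneg
    intro ⟨a, ha⟩
    exact mul_nonneg (Real.exp_pos _).le (hfpos _ (cons_mem' A hω (hMA _ _ ha)))
  · intro ω hω υ hυ hag
    by_cases hωυ : ω = υ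
    · subst hωυ
      simp [TMS.dtheta]
    · have hne : {n | ω n ≠ υ n}.Nonempty := Function.ne_iff.mp hωυ
      set N := sInf {n | ω n ≠ υ n} with hNdef
      have hmemN := Nat.sInf_mem hne
      have hkN : k ≤ N := by
        by_contra h
        push_neg at h
        exact hmemN (hag _ h)
      have hagN : ∀ i, i < N → ω i = υ i := by
        intro i hi
        by_contra h
        have : N ≤ i := Nat.sInf_le (show i ∈ {n | ω n ≠ υ n} from h)
        omega
      have hdth : TMS.dtheta θ ω υ = θ ^ N := by
        simp only [TMS.dtheta, hωυ, if_false]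
        rfl
      have h0 : ω 0 = υ 0 := hag 0 hk
      rw [hdth]
      simp only [TMS.transfer]
      rw [h0]
      set K := Real.exp (c * θ ^ N) with hKdef
      set g : {a : S // M a (υ 0)} → ℝ :=
        fun a => Real.exp (φ (TMS.cons a.1 ω)) * f (TMS.cons a.1 ω) with hg
      set h : {a : S // M a (υ 0)} → ℝ :=
        fun a => Real.exp (φ (TMS.cons a.1 υ)) * f (TMS.cons a.1 υ) with hh
      have hgpos : ∀ a, 0 ≤ g a := fun ⟨a, ha⟩ =>
        mul_nonneg (Real.exp_pos _).le
          (hfpos _ (cons_mem' A hω (show A a (ω 0) by rw [h0]; exact hMA _ _ ha)))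
      have hhpos : ∀ a, 0 ≤ h a := fun ⟨a, ha⟩ =>
        mul_nonneg (Real.exp_pos _).le (hfpos _ (cons_mem' A hυ (hMA _ _ ha)))
      have hgh : ∀ a, g a ≤ K * h a := fun ⟨a, ha⟩ =>
        term_bound' A θ hθ0 hθ1 k φ Cφ hCφ c hc0 hkey f hfpos hfc hω hυ N hkN hagN
          (show A a (ω 0) by rw [h0]; exact hMA _ _ ha) (hMA _ _ ha)
      have hhg : ∀ a, h a ≤ K * g a := fun ⟨a, ha⟩ =>
        term_bound' A θ hθ0 hθ1 k φ Cφ hCφ c hc0 hkey f hfpos hfc hυ hω N hkN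
          (fun i hi => (hagN i hi).symm) (hMA _ _ ha) (show A a (ω 0) by rw [h0]; exact hMA _ _ ha)
      by_cases hs : Summable h
      · have hKh : Summable fun a => K * h a := hs.mul_left K
        have hgs : Summable g := Summable.of_nonneg_of_le hgpos hgh hKh
        calc ∑' a, g a ≤ ∑' a, K * h a := Summable.tsum_le_tsum hgh hgs hKh
          _ = K * ∑' a, h a := tsum_mul_left
      · have hgns : ¬ Summable g := fun hgs =>
          hs (Summable.of_nonneg_of_le hhpos hhg (hgs.mul_left K))
        rw [tsum_eq_zero_of_not_summable hgns]
        exact mul_nonneg (Real.exp_pos _).le (tsum_nonneg hhpos)
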